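/- Let L : [0,∞) → [0,∞) be a strictly increasing continuous function, slowly varying at +∞, with L(0) = 0 and lim_{x→∞} L(x) = +∞, and inverse L⁻. Then for every u > 0 and ε ∈ (0,u), lim_{t→∞} sup_{y ∈ [0, u−ε]} | (L⁻(tu) − L⁻(ty))/L⁻(tu) − 1 | = 0. -/

import Mathlib

open Filter Set Topology

/-- If `L` is a strictly increasing continuous slowly varying function on `[0,∞)` with
`L 0 = 0`, `L(∞) = ∞` and inverse `Linv`, then for every `u > 0` and `ε ∈ (0,u)`,
`sup_{y ∈ [0,u-ε]} |(Linv(tu) - Linv(ty))/Linv(tu) - 1| → 0` as `t → ∞`. -/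
theorem stmt2 (L Linv : ℝ → ℝ)
    (hmono : StrictMonoOn L (Ici 0)) (hcont : ContinuousOn L (Ici 0))
    (hL0 : L 0 = 0) (htop : Tendsto L atTop atTop)
    (hslow : ∀ c > (0:ℝ), Tendsto (fun x => L (c * x) / L x) atTop (𝓝 1))
    (hLnonneg : ∀ x ≥ 0, 0 ≤ L x) (hInvnonneg : ∀ y ≥ 0, 0 ≤ Linv y)
    (hinv₁ : ∀ x ≥ 0, Linv (L x) = x) (hinv₂ : ∀ y ≥ 0, L (Linv y) = y)
    (u ε : ℝ) (hu : 0 < u) (hε : 0 < ε) (hεu : ε < u) :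
    Tendsto (fun t => ⨆ y ∈ Icc (0:ℝ) (u - ε),
      |(Linv (t * u) - Linv (t * y)) / Linv (t * u) - 1|) atTop (𝓝 0) := by
  have huε : 0 < u - ε := by linarith
  -- Linv is monotone on [0,∞)
  have hLinvMono : ∀ a b : ℝ, 0 ≤ a → a ≤ b → Linv a ≤ Linv b := by
    intro a b ha hab
    by_contra hlt
    push_neg at hlt
    have hb : (0:ℝ) ≤ b := ha.trans hab
    have := hmono (hInvnonneg b hb) (hInvnonneg a ha) hlt
    rw [hinv₂ a ha, hinv₂ b hb] at this
    linarith
  -- Linv tends to infinity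
  have hLinvTop : Tendsto Linv atTop atTop := by
    rw [tendsto_atTop]
    intro b
    filter_upwards [eventually_ge_atTop (L (max b 0))] with y hy
    have h0 : (0:ℝ) ≤ L (max b 0) := hLnonneg _ (le_max_right _ _)
    have := hLinvMono _ _ h0 hy
    rw [hinv₁ _ (le_max_right _ _)] at this
    exact (le_max_left b 0).trans this
  have htu : Tendsto (fun t : ℝ => t * u) atTop atTop :=
    Tendsto.atTop_mul_const hu tendsto_id
  have hA : Tendsto (fun t : ℝ => Linv (t * u)) atTop atTop := hLinvTop.comp htu
  have hApos : ∀ᶠ t in atTop, 0 < Linv (t * u) := hA.eventually_gt_atTop 0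
  -- The key ratio tends to 0
  have hratio : Tendsto (fun t => Linv (t * (u - ε)) / Linv (t * u)) atTop (𝓝 0) := by
    rw [tendsto_order]
    constructor
    · intro a ha
      filter_upwards [hApos, eventually_ge_atTop (0:ℝ)] with t hAt ht
      have h1 : 0 ≤ Linv (t * (u - ε)) := hInvnonneg _ (mul_nonneg ht huε.le)
      have : 0 ≤ Linv (t * (u - ε)) / Linv (t * u) := div_nonneg h1 hAt.le
      linarith
    · intro δ hδ
      have hcomp : Tendsto (fun t => L (δ * Linv (t * u)) / L (Linv (t * u))) atTop (𝓝 1) :=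
        (hslow δ hδ).comp hA
      have hρ : (u - ε) / u < 1 := by
        rw [div_lt_one hu]; linarith
      have hev : ∀ᶠ t in atTop, (u - ε) / u < L (δ * Linv (t * u)) / L (Linv (t * u)) :=
        hcomp.eventually_const_lt hρ
      filter_upwards [hev, hApos, eventually_gt_atTop (0:ℝ)] with t hevt hAt ht
      have htu0 : (0:ℝ) ≤ t * u := (mul_pos ht hu).le
      rw [hinv₂ _ htu0] at hevt
      have hkey : t * (u - ε) < L (δ * Linv (t * u)) := by
        rw [div_lt_div_iff₀ hu (mul_pos ht hu)] at hevt
        nlinarith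
      have h2 : L (Linv (t * (u - ε))) < L (δ * Linv (t * u)) := by
        rwa [hinv₂ _ (mul_pos ht huε).le]
      have h3 : Linv (t * (u - ε)) < δ * Linv (t * u) :=
        (hmono.lt_iff_lt (hInvnonneg _ (mul_pos ht huε).le)
          (mul_nonneg hδ.le hAt.le)).mp h2
      rw [div_lt_iff₀ hAt]
      exact h3
  -- Squeeze
  refine tendsto_of_tendsto_of_tendsto_of_le_of_le' tendsto_const_nhds hratio ?_ ?_
  · filter_upwards with t
    exact Real.iSup_nonneg fun y => Real.iSup_nonneg fun _ => abs_nonneg _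
  · filter_upwards [hApos, eventually_gt_atTop (0:ℝ)] with t hAt ht
    have hbnd : 0 ≤ Linv (t * (u - ε)) / Linv (t * u) :=
      div_nonneg (hInvnonneg _ (mul_pos ht huε).le) hAt.le
    refine Real.iSup_le (fun y => Real.iSup_le (fun hy => ?_) hbnd) hbnd
    obtain ⟨hy0, hy1⟩ := hy
    have hty : (0:ℝ) ≤ t * y := mul_nonneg ht.le hy0
    have hB : 0 ≤ Linv (t * y) := hInvnonneg _ hty
    have heq : (Linv (t * u) - Linv (t * y)) / Linv (t * u) - 1
        = -(Linv (t * y) / Linv (t * u)) := by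
      field_simp
      ring
    rw [heq, abs_neg, abs_of_nonneg (div_nonneg hB hAt.le)]
    gcongr
    exact hLinvMono _ _ hty (by nlinarith)
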